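/- Let k ≥ 1 and let φ be a Boolean function on V = {0,...,k}. Then φ →−* ⊥ (where →−* is the reflexive-transitive closure of →− and ⊥ is the Boolean function with no satisfying valuation) if and only if the subgraph of the hypercube graph G_V induced by the vertex set sat(φ) has a perfect matching. Symmetrically, φ →+* ⊤ (where ⊤ is the Boolean function satisfied by every valuation) if and only if the subgraph of G_V induced by the vertex set 2^V \ sat(φ) has a perfect matching. -/

import Mathlib

open scoped Classical

/-- Flip the membership of variable `l` in valuation `ν`. -/
def flipV {k : ℕ} (ν : Finset (Fin (k + 1))) (l : Fin (k + 1)) : Finset (Fin (k + 1)) :=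
  if l ∈ ν then ν.erase l else insert l ν

lemma flipV_flipV {k : ℕ} (ν : Finset (Fin (k + 1))) (l : Fin (k + 1)) :
    flipV (flipV ν l) l = ν := by
  unfold flipV
  by_cases h : l ∈ ν
  · simp [h, Finset.insert_erase h]
  · simp [h, Finset.erase_insert h]

lemma flipV_ne {k : ℕ} (ν : Finset (Fin (k + 1))) (l : Fin (k + 1)) :
    flipV ν l ≠ ν := by
  unfold flipV
  by_cases h : l ∈ ν
  · simp only [h, if_true]
    intro he
    exact (Finset.notMem_erase l ν) (he.symm ▸ h)
  · simp only [h, if_false]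
    intro he
    exact h (he ▸ Finset.mem_insert_self l ν)

/-- `φ →+ φ'`: there are `ν, l` with `ν ∉ sat(φ)`, `ν^(l) ∉ sat(φ)` and
`sat(φ') = sat(φ) ∪ {ν, ν^(l)}`. -/
def StepPlus (k : ℕ) (φ φ' : Finset (Fin (k + 1)) → Bool) : Prop :=
  ∃ (ν : Finset (Fin (k + 1))) (l : Fin (k + 1)),
    φ ν = false ∧ φ (flipV ν l) = false ∧
    ∀ μ, (φ' μ = true ↔ φ μ = true ∨ μ = ν ∨ μ = flipV ν l)

/-- `φ →− φ'`: remove two adjacent satisfying valuations. -/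
def StepMinus (k : ℕ) (φ φ' : Finset (Fin (k + 1)) → Bool) : Prop :=
  StepPlus k φ' φ

/-- `φ →± φ'`. -/
def StepPM (k : ℕ) (φ φ' : Finset (Fin (k + 1)) → Bool) : Prop :=
  StepPlus k φ φ' ∨ StepMinus k φ φ'

/-- The relation `≃` (equivalently `→±*`): the reflexive transitive closure of `→±`. -/
def EquivPM (k : ℕ) (φ φ' : Finset (Fin (k + 1)) → Bool) : Prop :=
  Relation.ReflTransGen (StepPM k) φ φ'

/-- The hypercube graph `G_V` on the valuations of `V = {0,...,k}`: there is an edge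
between `ν` and `ν^(l)` for every valuation `ν` and variable `l`. -/
def hypercube (k : ℕ) : SimpleGraph (Finset (Fin (k + 1))) where
  Adj ν μ := ∃ l, μ = flipV ν l
  symm := by
    constructor
    rintro ν μ ⟨l, rfl⟩
    exact ⟨l, (flipV_flipV ν l).symm⟩
  loopless := by
    constructor
    rintro ν ⟨l, h⟩
    exact flipV_ne ν l h.symm


def HasPM {k : ℕ} (S : Set (Finset (Fin (k + 1)))) : Prop :=
  ∃ f : Finset (Fin (k + 1)) → Finset (Fin (k + 1)),
    ∀ ν ∈ S, f ν ∈ S ∧ (hypercube k).Adj ν (f ν) ∧ f (f ν) = ν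

lemma hasPM_iff {k : ℕ} (S : Set (Finset (Fin (k + 1)))) :
    HasPM S ↔ ∃ M : ((hypercube k).induce S).Subgraph, M.IsPerfectMatching := by
  constructor
  · rintro ⟨f, hf⟩
    refine ⟨{ verts := Set.univ, Adj := fun a b => f ↑a = ↑b,
              adj_sub := ?_, edge_vert := by intros; trivial, symm := ?_ }, ?_⟩
    · intro a b hab
      have := (hf ↑a a.2).2.1
      rw [hab] at this
      exact this
    · constructor
      intro a b hab
      have h3 := (hf ↑a a.2).2.2
      rw [hab] at h3
      exact h3
    · rw [SimpleGraph.Subgraph.isPerfectMatching_iff]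
      intro v
      refine ⟨⟨f ↑v, (hf ↑v v.2).1⟩, rfl, ?_⟩
      rintro w hw
      exact Subtype.ext (Eq.symm hw)
  · rintro ⟨M, hM⟩
    rw [SimpleGraph.Subgraph.isPerfectMatching_iff] at hM
    set g : S → S := fun v => (hM v).choose with hg
    have hgadj : ∀ v : S, M.Adj v (g v) := fun v => (hM v).choose_spec.1
    have hgu : ∀ (v w : S), M.Adj v w → w = g v := fun v w h => (hM v).choose_spec.2 w h
    have hgg : ∀ v, g (g v) = v := fun v => (hgu (g v) v (M.adj_symm (hgadj v))).symm
    refine ⟨fun x => if h : x ∈ S then ↑(g ⟨x, h⟩) else x, fun ν hν => ?_⟩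
    simp only [dif_pos hν]
    refine ⟨(g ⟨ν, hν⟩).2, M.adj_sub (hgadj ⟨ν, hν⟩), ?_⟩
    rw [dif_pos (g ⟨ν, hν⟩).2]
    have he : (⟨↑(g ⟨ν, hν⟩), (g ⟨ν, hν⟩).2⟩ : S) = g ⟨ν, hν⟩ := rfl
    rw [he, hgg]

lemma minus_forward {k : ℕ} (φ : Finset (Fin (k + 1)) → Bool)
    (h : Relation.ReflTransGen (StepMinus k) φ (fun _ => false)) :
    HasPM {ν | φ ν = true} := by
  induction h using Relation.ReflTransGen.head_induction_on with
  | refl => exact ⟨id, by simp⟩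
  | head hstep _ ih =>
    obtain ⟨ν, l, hcν, hcfl, hiff⟩ := hstep
    obtain ⟨f, hf⟩ := ih
    set g : Finset (Fin (k + 1)) → Finset (Fin (k + 1)) :=
      fun μ => if μ = ν then flipV ν l else if μ = flipV ν l then ν else f μ with hg
    have hg1 : g ν = flipV ν l := by simp [hg]
    have hg2 : g (flipV ν l) = ν := by simp [hg, flipV_ne ν l]
    have hg3 : ∀ μ, μ ≠ ν → μ ≠ flipV ν l → g μ = f μ := by
      intro μ a b; simp [hg, a, b]
    refine ⟨g, fun μ hμ => ?_⟩
    have hμ' : _ = true := hμ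
    by_cases h1 : μ = ν
    · subst h1
      rw [hg1]
      exact ⟨(hiff _).mpr (Or.inr (Or.inr rfl)), ⟨l, rfl⟩, by rw [hg2]⟩
    · by_cases h2 : μ = flipV ν l
      · subst h2
        rw [hg2]
        exact ⟨(hiff _).mpr (Or.inr (Or.inl rfl)), ⟨l, (flipV_flipV ν l).symm⟩, by rw [hg1]⟩
      · rcases (hiff μ).mp hμ' with hcμ | h | h
        rotate_left
        · exact absurd h h1
        · exact absurd h h2
        obtain ⟨hf1, hf2, hf3⟩ := hf μ hcμ
        have hf1' : _ = true := hf1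
        have hfν : f μ ≠ ν := fun he => by
          rw [he, hcν] at hf1'; exact Bool.false_ne_true hf1'
        have hffl : f μ ≠ flipV ν l := fun he => by
          rw [he, hcfl] at hf1'; exact Bool.false_ne_true hf1'
        rw [hg3 μ h1 h2]
        exact ⟨(hiff _).mpr (Or.inl hf1'), hf2, by rw [hg3 (f μ) hfν hffl, hf3]⟩

lemma minus_backward {k : ℕ} : ∀ (n : ℕ) (φ : Finset (Fin (k + 1)) → Bool),
    (Finset.univ.filter (fun x => φ x = true)).card ≤ n →
    HasPM {ν | φ ν = true} →
    Relation.ReflTransGen (StepMinus k) φ (fun _ => false) := by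
  intro n
  induction n with
  | zero =>
    intro φ hcard _
    have hall : ∀ μ, φ μ = false := by
      intro μ
      by_contra h
      have h1 : φ μ = true := by simpa using h
      have h2 : μ ∈ Finset.univ.filter (fun x => φ x = true) := by simp [h1]
      have := Finset.card_pos.mpr ⟨μ, h2⟩
      omega
    rw [funext hall]
  | succ n ih =>
    rintro φ hcard ⟨f, hf⟩
    by_cases hemp : ∀ μ, φ μ = false
    · rw [funext hemp]
    · push_neg at hemp
      obtain ⟨ν, hν⟩ := hemp
      have hν' : φ ν = true := by simpa using hν
      obtain ⟨hfS, hadj, hff⟩ := hf ν hν'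
      have hfS' : φ (f ν) = true := hfS
      obtain ⟨l, hl⟩ := hadj
      have hμν : f ν ≠ ν := by rw [hl]; exact flipV_ne ν l
      set φ' : Finset (Fin (k + 1)) → Bool :=
        fun x => if x = ν ∨ x = f ν then false else φ x with hφ'
      have hφ'x : ∀ x, x ≠ ν → x ≠ f ν → φ' x = φ x := by
        intro x a b
        simp only [hφ']
        rw [if_neg (not_or.mpr ⟨a, b⟩)]
      have hφ'ν : φ' ν = false := by simp [hφ']
      have hφ'μ : φ' (f ν) = false := by simp [hφ']
      have hstep : StepMinus k φ φ' := by
        refine ⟨ν, l, hφ'ν, by rw [← hl]; exact hφ'μ, fun x => ?_⟩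
        rw [← hl]
        by_cases hx1 : x = ν
        · subst hx1; simp [hν']
        · by_cases hx2 : x = f ν
          · subst hx2; simp [hfS']
          · rw [hφ'x x hx1 hx2]; simp [hx1, hx2]
      refine Relation.ReflTransGen.head hstep (ih φ' ?_ ?_)
      · have hsub : Finset.univ.filter (fun x => φ' x = true) ⊆
            (Finset.univ.filter (fun x => φ x = true)).erase ν := by
          intro x hx
          simp only [Finset.mem_filter, Finset.mem_univ, true_and] at hx
          have hx1 : x ≠ ν := fun he => by rw [he, hφ'ν] at hx; exact Bool.false_ne_true hx
          have hx2 : x ≠ f ν := fun he => by rw [he, hφ'μ] at hx; exact Bool.false_ne_true hx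
          rw [hφ'x x hx1 hx2] at hx
          simp [Finset.mem_erase, hx1, hx]
        have h1 := Finset.card_le_card hsub
        have h2 : ν ∈ Finset.univ.filter (fun x => φ x = true) := by simp [hν']
        have h3 := Finset.card_erase_of_mem h2
        omega
      · refine ⟨f, fun x hx => ?_⟩
        have hx' : φ' x = true := hx
        have hx1 : x ≠ ν := fun he => by rw [he, hφ'ν] at hx'; exact Bool.false_ne_true hx'
        have hx2 : x ≠ f ν := fun he => by rw [he, hφ'μ] at hx'; exact Bool.false_ne_true hx'
        have hxφ : φ x = true := by rwa [hφ'x x hx1 hx2] at hx'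
        obtain ⟨g1, g2, g3⟩ := hf x hxφ
        have g1' : φ (f x) = true := g1
        have hfx1 : f x ≠ ν := by
          intro he
          exact hx2 (by rw [← g3, he])
        have hfx2 : f x ≠ f ν := by
          intro he
          have : f (f x) = f (f ν) := by rw [he]
          rw [g3, hff] at this
          exact hx1 this
        refine ⟨?_, g2, g3⟩
        show φ' (f x) = true
        rw [hφ'x (f x) hfx1 hfx2]
        exact g1'

lemma stepMinus_neg {k : ℕ} {φ φ' : Finset (Fin (k + 1)) → Bool} (h : StepPlus k φ φ') :
    StepMinus k (fun ν => !φ ν) (fun ν => !φ' ν) := by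
  obtain ⟨ν, l, h1, h2, h3⟩ := h
  refine ⟨ν, l, ?_, ?_, fun x => ?_⟩
  · have := (h3 ν).mpr (Or.inr (Or.inl rfl)); simp [this]
  · have := (h3 (flipV ν l)).mpr (Or.inr (Or.inr rfl)); simp [this]
  · simp only [Bool.not_eq_true']
    constructor
    · intro hx
      by_cases hx1 : x = ν
      · exact Or.inr (Or.inl hx1)
      · by_cases hx2 : x = flipV ν l
        · exact Or.inr (Or.inr hx2)
        · refine Or.inl ?_
          have : φ' x ≠ true := fun hh => by
            rcases (h3 x).mp hh with h | h | h
            · rw [h] at hx; exact absurd hx (by simp)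
            · exact hx1 h
            · exact hx2 h
          exact Bool.eq_false_iff.mpr this
    · rintro (h | rfl | rfl)
      · cases hx : φ x
        · rfl
        · have := (h3 x).mpr (Or.inl hx)
          rw [this] at h
          exact absurd h (by simp)
      · exact h1
      · exact h2

lemma stepPlus_neg {k : ℕ} {φ φ' : Finset (Fin (k + 1)) → Bool} (h : StepMinus k φ φ') :
    StepPlus k (fun ν => !φ ν) (fun ν => !φ' ν) :=
  stepMinus_neg h

lemma minus_iff {k : ℕ} (φ : Finset (Fin (k + 1)) → Bool) :
    Relation.ReflTransGen (StepMinus k) φ (fun _ => false) ↔ HasPM {ν | φ ν = true} :=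
  ⟨minus_forward φ, fun h => minus_backward _ φ le_rfl h⟩


/-- `φ →−* ⊥` iff the subgraph of `G_V` induced by `sat(φ)` has a perfect
matching, and `φ →+* ⊤` iff the subgraph of `G_V` induced by the complement of `sat(φ)`
has a perfect matching. -/
theorem stmt17 (k : ℕ) (hk : 1 ≤ k) (φ : Finset (Fin (k + 1)) → Bool) :
    (Relation.ReflTransGen (StepMinus k) φ (fun _ => false) ↔
      ∃ M : ((hypercube k).induce {ν | φ ν = true}).Subgraph, M.IsPerfectMatching) ∧
    (Relation.ReflTransGen (StepPlus k) φ (fun _ => true) ↔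
      ∃ M : ((hypercube k).induce {ν | φ ν = false}).Subgraph, M.IsPerfectMatching) := by
  constructor
  · rw [minus_iff]
    exact hasPM_iff _
  · rw [← hasPM_iff]
    have hset : {ν | φ ν = false} = {ν | (fun ν => !φ ν) ν = true} := by
      ext x; simp
    rw [hset, ← minus_iff]
    constructor
    · intro h
      have := Relation.ReflTransGen.lift (fun (ψ : Finset (Fin (k + 1)) → Bool) ν => !ψ ν)
        (fun a b hab => stepMinus_neg hab) _ _ h
      simpa [Function.onFun] using this
    · intro h
      have := Relation.ReflTransGen.lift (fun (ψ : Finset (Fin (k + 1)) → Bool) ν => !ψ ν)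
        (fun a b hab => stepPlus_neg hab) _ _ h
      simpa [Function.onFun] using this
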